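/- arXiv:2212.03900 — 3 statements merged into one kernel-verified Lean document; each statement's English description precedes it below -/
import Mathlib

section
/- For any positive invertible bounded operator T on H ⊕ H and any real α, the operator (JT)² + αI is compact if and only if (√T J √T)ᵀ(√T J √T) - αI is compact, where J(x,y) = (y,-x) and √T is the positive square root of T. -/
open ContinuousLinearMap

/-- For a positive invertible operator `T` on a real Hilbert space `H ⊕ H` (with the
symplectic involution `J`, `J² = -I`, `Jᵀ = -J`) and any real `α`, the operator
`(JT)² + αI` is compact if and only if `(√T J √T)ᵀ (√T J √T) - αI` is compact, where
`√T` is the (unique) positive square root of `T`. -/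
theorem compact_JT_sq_iff_sqrtT_form
    {E : Type*} [NormedAddCommGroup E] [InnerProductSpace ℝ E] [CompleteSpace E]
    [TopologicalSpace.SeparableSpace E]
    (J T sqrtT : E →L[ℝ] E)
    (hJ2 : J * J = -1) (hJadj : ContinuousLinearMap.adjoint J = -J)
    (hT : T.IsPositive) (hTunit : IsUnit T)
    (hs : sqrtT.IsPositive) (hsq : sqrtT * sqrtT = T)
    (α : ℝ) :
    IsCompactOperator ⇑((J * T) * (J * T) + α • (1 : E →L[ℝ] E)) ↔
      IsCompactOperator
        ⇑(ContinuousLinearMap.adjoint (sqrtT * J * sqrtT) * (sqrtT * J * sqrtT)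
          - α • (1 : E →L[ℝ] E)) := by
  classical
  -- `sqrtT` is invertible, with two-sided inverse `S`
  obtain ⟨v, hv⟩ := hTunit
  have hvsq : sqrtT * sqrtT = (v : E →L[ℝ] E) := by rw [hsq, hv]
  have hr : sqrtT * (sqrtT * (↑v⁻¹ : E →L[ℝ] E)) = 1 := by
    rw [← mul_assoc, hvsq]; exact_mod_cast v.mul_inv
  have hl : ((↑v⁻¹ : E →L[ℝ] E) * sqrtT) * sqrtT = 1 := by
    rw [mul_assoc, hvsq]; exact_mod_cast v.inv_mul
  set S : E →L[ℝ] E := sqrtT * (↑v⁻¹ : E →L[ℝ] E) with hS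
  have heq : S = (↑v⁻¹ : E →L[ℝ] E) * sqrtT := by
    calc S = (((↑v⁻¹ : E →L[ℝ] E) * sqrtT) * sqrtT) * S := by rw [hl, one_mul]
      _ = ((↑v⁻¹ : E →L[ℝ] E) * sqrtT) * (sqrtT * S) := by rw [mul_assoc]
      _ = ↑v⁻¹ * sqrtT := by rw [hS, hr, mul_one]
  have hrS : sqrtT * S = 1 := hr
  have hlS : S * sqrtT = 1 := by rw [heq]; exact hl
  have hadj_s : ContinuousLinearMap.adjoint sqrtT = sqrtT := hs.isSelfAdjoint
  set L : E →L[ℝ] E := (J * T) * (J * T) + α • (1 : E →L[ℝ] E) with hL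
  set R : E →L[ℝ] E :=
    ContinuousLinearMap.adjoint (sqrtT * J * sqrtT) * (sqrtT * J * sqrtT)
      - α • (1 : E →L[ℝ] E) with hR
  have hadjS : ContinuousLinearMap.adjoint (sqrtT * J * sqrtT)
      = -(sqrtT * J * sqrtT) := by
    simp only [← ContinuousLinearMap.star_eq_adjoint, star_mul]
    simp only [ContinuousLinearMap.star_eq_adjoint, hadj_s, hJadj]
    noncomm_ring
  have hTs : T * S = sqrtT := by
    rw [← hsq, mul_assoc, hrS, mul_one]
  -- key algebraic identity: R = -(sqrtT * L * S)
  have key : R = -(sqrtT * L * S) := by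
    have e1 : sqrtT * L * S
        = sqrtT * J * T * J * (T * S) + α • (sqrtT * S) := by
      rw [hL, mul_add, add_mul]
      congr 1
      all_goals first
        | (ext x; simp [ContinuousLinearMap.mul_apply, map_smul])
        | noncomm_ring
    rw [hR, hadjS, e1, hTs, hrS]
    have e2 : -(sqrtT * J * sqrtT) * (sqrtT * J * sqrtT)
        = -(sqrtT * J * T * J * sqrtT) := by
      rw [← hsq]; noncomm_ring
    rw [e2, neg_add, ← sub_eq_add_neg]
  constructor
  · intro h
    rw [key]
    have h1 : IsCompactOperator ⇑(sqrtT * L * S) := by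
      have := (h.comp_clm S).clm_comp sqrtT
      simpa [ContinuousLinearMap.coe_mul, Function.comp_assoc] using this
    simpa using h1.neg
  · intro h
    have hLS : L = -(S * R * sqrtT) := by
      have e3 : S * (sqrtT * L * S) * sqrtT = (S * sqrtT) * L * (S * sqrtT) := by
        noncomm_ring
      rw [key]
      calc L = (S * sqrtT) * L * (S * sqrtT) := by rw [hlS, one_mul, mul_one]
        _ = S * (sqrtT * L * S) * sqrtT := e3.symm
        _ = -(S * -(sqrtT * L * S) * sqrtT) := by
            rw [mul_neg, neg_mul, neg_neg]
    rw [hLS]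
    have h1 : IsCompactOperator ⇑(S * R * sqrtT) := by
      have := (h.comp_clm sqrtT).clm_comp S
      simpa [ContinuousLinearMap.coe_mul, Function.comp_assoc] using this
    simpa using h1.neg
end

section
/- Let T be a positive invertible operator on H ⊕ H with T - αI compact for some nonzero real α. Then for every j ≥ 1, the j-th largest symplectic eigenvalue of T is at most the j-th largest eigenvalue of T: d_j↓(T) ≤ λ_j↓(T). -/
open ContinuousLinearMap

noncomputable section

/-- The `n`-th largest eigenvalue (counted with multiplicity, `n` starting from `0`) of a
self-adjoint operator `T`, given by the Courant–Fischer max-min formula: the sup over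
`(n+1)`-dimensional subspaces `N` of the inf of the Rayleigh quotient over unit vectors
of `N`. -/
def nthEigenMax {E : Type*} [NormedAddCommGroup E] [InnerProductSpace ℂ E]
    (T : E →L[ℂ] E) (n : ℕ) : ℝ :=
  sSup {r : ℝ | ∃ N : Submodule ℂ E, Module.finrank ℂ N = n + 1 ∧
    r = sInf {c : ℝ | ∃ x : E, x ∈ N ∧ ‖x‖ = 1 ∧ c = (inner ℂ (T x) x : ℂ).re}}

section Aux

variable {E : Type*} [NormedAddCommGroup E] [InnerProductSpace ℂ E] [CompleteSpace E]

lemma unit_vector_exists {N : Submodule ℂ E} {j : ℕ} (hN : Module.finrank ℂ N = j + 1) :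
    ∃ x : E, x ∈ N ∧ ‖x‖ = 1 := by
  have hne : ∃ x : E, x ∈ N ∧ x ≠ 0 := by
    by_contra h
    push_neg at h
    have hbot : N = ⊥ := (Submodule.eq_bot_iff N).2 h
    rw [hbot, finrank_bot] at hN
    omega
  obtain ⟨x, hxN, hx0⟩ := hne
  refine ⟨((‖x‖⁻¹ : ℝ) : ℂ) • x, N.smul_mem _ hxN, ?_⟩
  have hxn : ‖x‖ ≠ 0 := norm_ne_zero_iff.2 hx0
  rw [norm_smul]
  simp [abs_of_nonneg (inv_nonneg.2 (norm_nonneg x)), inv_mul_cancel₀ hxn]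

lemma rayleigh_le_opNorm (T : E →L[ℂ] E) {x : E} (hx : ‖x‖ = 1) :
    (inner ℂ (T x) x : ℂ).re ≤ ‖T‖ := by
  have h1 : (inner ℂ (T x) x : ℂ).re ≤ ‖(inner ℂ (T x) x : ℂ)‖ := Complex.re_le_norm _
  have h2 : ‖(inner ℂ (T x) x : ℂ)‖ ≤ ‖T x‖ * ‖x‖ := norm_inner_le_norm _ _
  have h3 : ‖T x‖ ≤ ‖T‖ * ‖x‖ := T.le_opNorm x
  rw [hx] at h2 h3
  linarith

lemma neg_opNorm_le_rayleigh (T : E →L[ℂ] E) {x : E} (hx : ‖x‖ = 1) :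
    -‖T‖ ≤ (inner ℂ (T x) x : ℂ).re := by
  have h1 : |(inner ℂ (T x) x : ℂ).re| ≤ ‖(inner ℂ (T x) x : ℂ)‖ := Complex.abs_re_le_norm _
  have h2 : ‖(inner ℂ (T x) x : ℂ)‖ ≤ ‖T x‖ * ‖x‖ := norm_inner_le_norm _ _
  have h3 : ‖T x‖ ≤ ‖T‖ * ‖x‖ := T.le_opNorm x
  rw [hx] at h2 h3
  have := abs_le.1 (le_trans h1 (by linarith : ‖(inner ℂ (T x) x : ℂ)‖ ≤ ‖T‖))
  linarith [this.1]

end Aux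

/-- Interlacing, decreasing case.  Let `T` be a positive invertible operator on `H ⊕ H`
with `T - αI` compact for some nonzero real `α` (everything viewed in the
complexification, where `A = iJ` is the self-adjoint unitary coming from the symplectic
involution `J`).  The symplectic eigenvalues of `T`, arranged in decreasing order, are
the positive eigenvalues of `R = √T (iJ) √T` in decreasing order.  Then for every `j`,
the `j`-th largest symplectic eigenvalue of `T` is at most the `j`-th largest eigenvalue
of `T`: `d_j↓(T) ≤ λ_j↓(T)`. -/
theorem symplectic_eigenvalue_le_eigenvalue
    {E : Type*} [NormedAddCommGroup E] [InnerProductSpace ℂ E] [CompleteSpace E]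
    [TopologicalSpace.SeparableSpace E]
    (T A sqrtT R : E →L[ℂ] E)
    (hT : T.IsPositive) (hTunit : IsUnit T)
    (α : ℝ) (hα : α ≠ 0)
    (hcpt : IsCompactOperator ⇑(T - (α : ℂ) • (1 : E →L[ℂ] E)))
    (hA : IsSelfAdjoint A) (hA2 : A * A = 1)
    (hs : sqrtT.IsPositive) (hsq : sqrtT * sqrtT = T)
    (hR : R = sqrtT * A * sqrtT)
    (j : ℕ) :
    nthEigenMax R j ≤ nthEigenMax T j := by
  -- pointwise Rayleigh comparison
  have hRay : ∀ x : E, (inner ℂ (R x) x : ℂ).re ≤ (inner ℂ (T x) x : ℂ).re := by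
    intro x
    have hTx : (inner ℂ (T x) x : ℂ).re = ‖sqrtT x‖ ^ 2 := by
      rw [← hsq]
      simp only [mul_apply_eq_comp]
      have h := hs.1 (sqrtT x) x
      simp only [ContinuousLinearMap.coe_coe] at h
      rw [h]
      simpa using inner_self_eq_norm_sq (𝕜 := ℂ) (sqrtT x)
    rw [hR, hTx]
    -- main inequality: ⟨(√T A √T) x, x⟩.re ≤ ‖√T x‖²
    have h1 : (inner ℂ ((sqrtT * A * sqrtT) x) x : ℂ) = inner ℂ (A (sqrtT x)) (sqrtT x) := by
      simp only [mul_apply_eq_comp]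
      have := hs.1 (A (sqrtT x)) x
      simpa using this
    rw [h1]
    have hnorm : ‖A (sqrtT x)‖ = ‖sqrtT x‖ := by
      have key : ∀ y : E, ‖A y‖ ^ 2 = ‖y‖ ^ 2 := by
        intro y
        have h := hA.isSymmetric (A y) y
        simp only [ContinuousLinearMap.coe_coe] at h
        rw [show A (A y) = y from by rw [← mul_apply_eq_comp A A y, hA2, one_apply_eq_self]] at h
        have e1 : (inner ℂ (A y) (A y) : ℂ).re = ‖A y‖ ^ 2 := by
          simpa using inner_self_eq_norm_sq (𝕜 := ℂ) (A y)
        have e2 : (inner ℂ y y : ℂ).re = ‖y‖ ^ 2 := by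
          simpa using inner_self_eq_norm_sq (𝕜 := ℂ) y
        have := congrArg Complex.re h.symm
        rwa [e1, e2] at this
      have := key (sqrtT x)
      nlinarith [norm_nonneg (A (sqrtT x)), norm_nonneg (sqrtT x)]
    have hcs : (inner ℂ (A (sqrtT x)) (sqrtT x) : ℂ).re ≤ ‖A (sqrtT x)‖ * ‖sqrtT x‖ := by
      simpa using re_inner_le_norm (𝕜 := ℂ) (A (sqrtT x)) (sqrtT x)
    calc (inner ℂ (A (sqrtT x)) (sqrtT x) : ℂ).re ≤ ‖A (sqrtT x)‖ * ‖sqrtT x‖ := hcs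
      _ = ‖sqrtT x‖ ^ 2 := by rw [hnorm]; ring
  have hTpos : ∀ x : E, 0 ≤ (inner ℂ (T x) x : ℂ).re := by
    intro x
    simpa [ContinuousLinearMap.reApplyInnerSelf] using hT.2 x
  -- the Rayleigh sets
  set CR : Submodule ℂ E → Set ℝ :=
    fun N => {c : ℝ | ∃ x : E, x ∈ N ∧ ‖x‖ = 1 ∧ c = (inner ℂ (R x) x : ℂ).re} with hCR
  set CT : Submodule ℂ E → Set ℝ :=
    fun N => {c : ℝ | ∃ x : E, x ∈ N ∧ ‖x‖ = 1 ∧ c = (inner ℂ (T x) x : ℂ).re} with hCT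
  have hCRbdd : ∀ N, BddBelow (CR N) := by
    rintro N
    refine ⟨-‖R‖, ?_⟩
    rintro c ⟨x, _, hx1, rfl⟩
    exact neg_opNorm_le_rayleigh R hx1
  have hCTbdd : ∀ N, BddBelow (CT N) := by
    rintro N
    refine ⟨0, ?_⟩
    rintro c ⟨x, _, _, rfl⟩
    exact hTpos x
  have hCTne : ∀ N : Submodule ℂ E, Module.finrank ℂ N = j + 1 → (CT N).Nonempty := by
    intro N hN
    obtain ⟨x, hxN, hx1⟩ := unit_vector_exists hN
    exact ⟨_, x, hxN, hx1, rfl⟩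
  -- the sup sets
  set ST : Set ℝ := {r : ℝ | ∃ N : Submodule ℂ E, Module.finrank ℂ N = j + 1 ∧ r = sInf (CT N)}
    with hST
  have hSTbdd : BddAbove ST := by
    refine ⟨‖T‖, ?_⟩
    rintro r ⟨N, hN, rfl⟩
    obtain ⟨x, hxN, hx1⟩ := unit_vector_exists hN
    exact le_trans (csInf_le (hCTbdd N) ⟨x, hxN, hx1, rfl⟩) (rayleigh_le_opNorm T hx1)
  -- key comparison per subspace
  have hInf : ∀ N : Submodule ℂ E, Module.finrank ℂ N = j + 1 →
      sInf (CR N) ≤ sInf (CT N) := by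
    intro N hN
    refine le_csInf (hCTne N hN) ?_
    rintro b ⟨x, hxN, hx1, rfl⟩
    exact le_trans (csInf_le (hCRbdd N) ⟨x, hxN, hx1, rfl⟩) (hRay x)
  show sSup _ ≤ sSup ST
  by_cases hex : ∃ N : Submodule ℂ E, Module.finrank ℂ N = j + 1
  · obtain ⟨N₀, hN₀⟩ := hex
    have hST0 : (0 : ℝ) ≤ sSup ST := by
      have h1 : (0 : ℝ) ≤ sInf (CT N₀) :=
        le_csInf (hCTne N₀ hN₀) (by rintro b ⟨x, _, _, rfl⟩; exact hTpos x)
      exact le_trans h1 (le_csSup hSTbdd ⟨N₀, hN₀, rfl⟩)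
    apply Real.sSup_le _ hST0
    rintro r ⟨N, hN, rfl⟩
    exact le_trans (hInf N hN) (le_csSup hSTbdd ⟨N, hN, rfl⟩)
  · have h1 : {r : ℝ | ∃ N : Submodule ℂ E, Module.finrank ℂ N = j + 1 ∧
        r = sInf (CR N)} = ∅ := by
      ext r; simp only [Set.mem_setOf_eq, Set.mem_empty_iff_false, iff_false]
      rintro ⟨N, hN, _⟩; exact hex ⟨N, hN⟩
    have h2 : ST = ∅ := by
      ext r; simp only [hST, Set.mem_setOf_eq, Set.mem_empty_iff_false, iff_false]
      rintro ⟨N, hN, _⟩; exact hex ⟨N, hN⟩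
    rw [h1, h2]

end
end

section
/- For a positive invertible operator S satisfying (√S J √S)ᵀ(√S J √S) - I trace class, this condition is equivalent to (JS)² + I being trace class. -/
open ContinuousLinearMap

/-- `T` is a Hilbert–Schmidt operator: the sums `∑ ‖T x‖²` over finite orthonormal
families are uniformly bounded. -/
def IsHilbertSchmidt {E : Type*} [NormedAddCommGroup E] [InnerProductSpace ℝ E]
    (T : E →L[ℝ] E) : Prop :=
  ∃ C : ℝ, ∀ s : Finset E, Orthonormal ℝ (fun x : s => (x : E)) →
    ∑ x ∈ s, ‖T x‖ ^ 2 ≤ C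

/-- `T` is trace class: it is a product of two Hilbert–Schmidt operators. -/
def IsTraceClass {E : Type*} [NormedAddCommGroup E] [InnerProductSpace ℝ E]
    (T : E →L[ℝ] E) : Prop :=
  ∃ A B : E →L[ℝ] E, IsHilbertSchmidt A ∧ IsHilbertSchmidt B ∧ T = A * B

section aux
variable {E : Type*} [NormedAddCommGroup E] [InnerProductSpace ℝ E] [CompleteSpace E]

omit [CompleteSpace E] in
lemma isHilbertSchmidt_mul_left (U T : E →L[ℝ] E) (hT : IsHilbertSchmidt T) :
    IsHilbertSchmidt (U * T) := by
  obtain ⟨C, hC⟩ := hT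
  refine ⟨(max ‖U‖ 1) ^ 2 * max C 0, fun s hs => ?_⟩
  have h1 : ∀ x ∈ s, ‖(U * T) x‖ ^ 2 ≤ (max ‖U‖ 1) ^ 2 * ‖T x‖ ^ 2 := by
    intro x _
    have h2 : ‖U (T x)‖ ≤ max ‖U‖ 1 * ‖T x‖ :=
      le_trans (U.le_opNorm (T x)) (by gcongr; exact le_max_left _ _)
    calc ‖(U * T) x‖ ^ 2 = ‖U (T x)‖ ^ 2 := rfl
      _ ≤ (max ‖U‖ 1 * ‖T x‖) ^ 2 := by
          apply pow_le_pow_left₀ (norm_nonneg _) h2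
      _ = (max ‖U‖ 1) ^ 2 * ‖T x‖ ^ 2 := by ring
  calc ∑ x ∈ s, ‖(U * T) x‖ ^ 2 ≤ ∑ x ∈ s, (max ‖U‖ 1) ^ 2 * ‖T x‖ ^ 2 :=
        Finset.sum_le_sum h1
    _ = (max ‖U‖ 1) ^ 2 * ∑ x ∈ s, ‖T x‖ ^ 2 := by rw [Finset.mul_sum]
    _ ≤ (max ‖U‖ 1) ^ 2 * max C 0 := by
        apply mul_le_mul_of_nonneg_left _ (by positivity)
        exact le_trans (hC s hs) (le_max_left _ _)

lemma isHilbertSchmidt_adjoint (T : E →L[ℝ] E) (hT : IsHilbertSchmidt T) :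
    IsHilbertSchmidt (ContinuousLinearMap.adjoint T) := by
  classical
  obtain ⟨C, hC⟩ := hT
  refine ⟨max C 0, fun s hs => ?_⟩
  set T' := ContinuousLinearMap.adjoint T with hT'
  set W : Submodule ℝ E := Submodule.span ℝ (T' '' (s : Set E)) with hW
  haveI : FiniteDimensional ℝ W :=
    FiniteDimensional.span_of_finite ℝ ((s.finite_toSet).image _)
  set b := stdOrthonormalBasis ℝ W with hb
  -- the coerced family is orthonormal in E
  have hbE : Orthonormal ℝ (fun i => ((b i : W) : E)) := by
    rw [orthonormal_iff_ite]
    intro i j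
    rw [← Submodule.coe_inner]
    exact orthonormal_iff_ite.mp b.orthonormal i j
  have hbinj : Function.Injective (fun i => ((b i : W) : E)) :=
    hbE.linearIndependent.injective
  -- step 1: rewrite each norm via the basis
  have step1 : ∀ x ∈ s, ‖T' x‖ ^ 2 =
      ∑ i, (inner ℝ (T' x) ((b i : W) : E) : ℝ) ^ 2 := by
    intro x hx
    have hmem : T' x ∈ W := Submodule.subset_span ⟨x, hx, rfl⟩
    have := b.sum_inner_mul_inner (⟨T' x, hmem⟩ : W) (⟨T' x, hmem⟩ : W)
    have h2 : ∑ i, (inner ℝ (T' x) ((b i : W) : E) : ℝ) *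
        (inner ℝ ((b i : W) : E) (T' x) : ℝ) = (inner ℝ (T' x) (T' x) : ℝ) := by
      simpa [Submodule.coe_inner] using this
    rw [← real_inner_self_eq_norm_sq]
    rw [← h2]
    congr 1
    ext i
    rw [sq, real_inner_comm (T' x) ((b i : W) : E)]
  calc ∑ x ∈ s, ‖T' x‖ ^ 2
      = ∑ x ∈ s, ∑ i, (inner ℝ (T' x) ((b i : W) : E) : ℝ) ^ 2 :=
        Finset.sum_congr rfl step1
    _ = ∑ i, ∑ x ∈ s, (inner ℝ (T' x) ((b i : W) : E) : ℝ) ^ 2 :=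
        Finset.sum_comm
    _ ≤ ∑ i, ‖T ((b i : W) : E)‖ ^ 2 := by
        apply Finset.sum_le_sum
        intro i _
        have key : ∀ x ∈ s, (inner ℝ (T' x) ((b i : W) : E) : ℝ) ^ 2 =
            ‖(inner ℝ (x : E) (T ((b i : W) : E)) : ℝ)‖ ^ 2 := by
          intro x hx
          rw [hT', ContinuousLinearMap.adjoint_inner_left]
          rw [Real.norm_eq_abs, sq_abs]
        rw [Finset.sum_congr rfl key]
        have bessel := hs.sum_inner_products_le (s := Finset.univ)
          (T ((b i : W) : E))
        calc ∑ x ∈ s, ‖(inner ℝ (x : E) (T ((b i : W) : E)) : ℝ)‖ ^ 2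
            = ∑ x : s, ‖(inner ℝ (x : E) (T ((b i : W) : E)) : ℝ)‖ ^ 2 :=
              (Finset.sum_coe_sort s _).symm
          _ ≤ ‖T ((b i : W) : E)‖ ^ 2 := bessel
    _ ≤ max C 0 := by
        set t : Finset E := Finset.image (fun i => ((b i : W) : E)) Finset.univ
          with ht
        have hts : ∑ x ∈ t, ‖T x‖ ^ 2 = ∑ i, ‖T ((b i : W) : E)‖ ^ 2 :=
          Finset.sum_image (fun i _ j _ h => hbinj h)
        have htorth : Orthonormal ℝ (fun x : t => (x : E)) := by
          rw [orthonormal_iff_ite]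
          rintro ⟨x, hx⟩ ⟨y, hy⟩
          obtain ⟨i, -, rfl⟩ := Finset.mem_image.mp hx
          obtain ⟨j, -, rfl⟩ := Finset.mem_image.mp hy
          have := orthonormal_iff_ite.mp hbE i j
          simp only [this]
          by_cases hij : i = j
          · simp [hij]
          · have : ((b i : W) : E) ≠ ((b j : W) : E) := fun h => hij (hbinj h)
            simp [hij, Subtype.ext_iff, this]
        rw [← hts]
        exact le_trans (hC t htorth) (le_max_left _ _)

lemma isHilbertSchmidt_mul_right (T V : E →L[ℝ] E) (hT : IsHilbertSchmidt T) :
    IsHilbertSchmidt (T * V) := by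
  have h1 : IsHilbertSchmidt (ContinuousLinearMap.adjoint V *
      ContinuousLinearMap.adjoint T) :=
    isHilbertSchmidt_mul_left _ _ (isHilbertSchmidt_adjoint T hT)
  have h2 := isHilbertSchmidt_adjoint _ h1
  have h3 : ContinuousLinearMap.adjoint (ContinuousLinearMap.adjoint V *
      ContinuousLinearMap.adjoint T) = T * V := by
    simp only [ContinuousLinearMap.mul_def, adjoint_comp, adjoint_adjoint]
  rwa [h3] at h2

omit [CompleteSpace E] in
lemma isHilbertSchmidt_neg (T : E →L[ℝ] E) (hT : IsHilbertSchmidt T) :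
    IsHilbertSchmidt (-T) := by
  obtain ⟨C, hC⟩ := hT
  refine ⟨C, fun s hs => ?_⟩
  simpa using hC s hs

lemma isTraceClass_conj (U V T : E →L[ℝ] E) (h : IsTraceClass T) :
    IsTraceClass (U * T * V) := by
  obtain ⟨A, B, hA, hB, hAB⟩ := h
  exact ⟨U * A, B * V, isHilbertSchmidt_mul_left U A hA,
    isHilbertSchmidt_mul_right B V hB, by rw [hAB]; noncomm_ring⟩

omit [CompleteSpace E] in
lemma isTraceClass_neg (T : E →L[ℝ] E) (h : IsTraceClass T) :
    IsTraceClass (-T) := by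
  obtain ⟨A, B, hA, hB, hAB⟩ := h
  exact ⟨-A, B, isHilbertSchmidt_neg A hA, hB, by rw [hAB]; noncomm_ring⟩

end aux

/-- For a positive invertible operator `S` on `H ⊕ H` (with the symplectic involution
`J`, `J² = -I`, `Jᵀ = -J`, and `√S` the positive square root of `S`), the condition
`(√S J √S)ᵀ (√S J √S) - I` trace class is equivalent to `(JS)² + I` trace class. -/
theorem traceClass_equiv_conditions
    {E : Type*} [NormedAddCommGroup E] [InnerProductSpace ℝ E] [CompleteSpace E]
    [TopologicalSpace.SeparableSpace E]
    (J S sqrtS : E →L[ℝ] E)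
    (hJ2 : J * J = -1) (hJadj : ContinuousLinearMap.adjoint J = -J)
    (hS : S.IsPositive) (hSunit : IsUnit S)
    (hs : sqrtS.IsPositive) (hsq : sqrtS * sqrtS = S) :
    IsTraceClass
        (ContinuousLinearMap.adjoint (sqrtS * J * sqrtS) * (sqrtS * J * sqrtS) - 1) ↔
      IsTraceClass ((J * S) * (J * S) + 1) := by
  have hsA : ContinuousLinearMap.adjoint sqrtS = sqrtS :=
    ContinuousLinearMap.isSelfAdjoint_iff'.mp hs.isSelfAdjoint
  -- inverse of S
  obtain ⟨u, hu⟩ := hSunit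
  set Si : E →L[ℝ] E := (↑u⁻¹ : E →L[ℝ] E) with hSi
  have hSi1 : S * Si = 1 := by rw [← hu, hSi]; exact u.mul_inv
  have hSi2 : Si * S = 1 := by rw [← hu, hSi]; exact u.inv_mul
  -- sqrtS commutes with S and Si
  have hcommS : S * sqrtS = sqrtS * S := by rw [← hsq]; noncomm_ring
  have hcomm : sqrtS * Si = Si * sqrtS := by
    calc sqrtS * Si = Si * S * (sqrtS * Si) := by rw [hSi2, one_mul]
      _ = Si * (S * sqrtS) * Si := by noncomm_ring
      _ = Si * (sqrtS * S) * Si := by rw [hcommS]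
      _ = Si * sqrtS * (S * Si) := by noncomm_ring
      _ = Si * sqrtS := by rw [hSi1, mul_one]
  set R : E →L[ℝ] E := Si * sqrtS with hR
  have hRs : R * sqrtS = 1 := by rw [hR, mul_assoc, hsq, hSi2]
  have hsR : sqrtS * R = 1 := by
    rw [hR, ← mul_assoc, hcomm, mul_assoc, hsq, hSi2]
  -- adjoint of sqrtS * J * sqrtS
  have hadjA : ContinuousLinearMap.adjoint (sqrtS * J * sqrtS) =
      -(sqrtS * J * sqrtS) := by
    simp only [ContinuousLinearMap.mul_def, ContinuousLinearMap.adjoint_comp,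
      hJadj, hsA]
    ext x; simp
  -- the key algebraic identity
  have key : ContinuousLinearMap.adjoint (sqrtS * J * sqrtS) * (sqrtS * J * sqrtS)
      - 1 = -(sqrtS * ((J * S) * (J * S) + 1) * R) := by
    rw [hadjA]
    have e1 : sqrtS * ((J * S) * (J * S) + 1) * R
        = sqrtS * J * S * J * (S * R) + sqrtS * R := by noncomm_ring
    have e2 : S * R = sqrtS := by
      rw [hR, ← mul_assoc, hSi1, one_mul]
    rw [e1, e2, hsR]
    have e3 : -(sqrtS * J * sqrtS) * (sqrtS * J * sqrtS)
        = -(sqrtS * J * (sqrtS * sqrtS) * J * sqrtS) := by noncomm_ring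
    rw [e3, hsq]
    noncomm_ring
  constructor
  · intro h
    have h2 := isTraceClass_neg _ (isTraceClass_conj R sqrtS _ h)
    have e : -(R * (ContinuousLinearMap.adjoint (sqrtS * J * sqrtS) *
        (sqrtS * J * sqrtS) - 1) * sqrtS) = (J * S) * (J * S) + 1 := by
      rw [key]
      have : R * -(sqrtS * ((J * S) * (J * S) + 1) * R) * sqrtS
          = -((R * sqrtS) * ((J * S) * (J * S) + 1) * (R * sqrtS)) := by noncomm_ring
      rw [this, hRs]
      noncomm_ring
    rwa [e] at h2
  · intro h
    have h2 := isTraceClass_neg _ (isTraceClass_conj sqrtS R _ h)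
    rwa [← key] at h2
end
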